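/- Let Γ₁ be the image of φ : ℙ¹(ℂ) → ℙ³(ℂ), [x:y] ↦ [x⁵ : x⁴y − 4x²y³ : −4x³y² + xy⁴ : y⁵]. If L ⊂ ℙ³(ℂ) is a line such that there exist four distinct points t₁, t₂, t₃, t₄ ∈ ℙ¹(ℂ) with φ(tᵢ) ∈ L for i = 1,2,3,4, then L = L₁ = {[x₀:x₁:x₂:x₃] : x₀ + x₂ = 0 and x₃ + x₁ = 0}. That is, L₁ is the unique quadrisecant line to the rational quintic curve Γ₁. -/
import Mathlib

noncomputable section

/-- Projective 3-space over ℂ. -/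
abbrev P3 := Projectivization ℂ (Fin 4 → ℂ)

/-- Projective line over ℂ. -/
abbrev P1 := Projectivization ℂ (Fin 2 → ℂ)

/-- A line in ℙ³(ℂ): the image in ℙ³ of a 2-dimensional linear subspace of ℂ⁴. -/
def IsLine (L : Set P3) : Prop :=
  ∃ W : Submodule ℂ (Fin 4 → ℂ), Module.finrank ℂ W = 2 ∧ L = {p : P3 | p.submodule ≤ W}

/-- Homogeneous coordinates of φ([x:y]) = [x⁵ : x⁴y − 4x²y³ : −4x³y² + xy⁴ : y⁵]
(the parametrization φ_{a,b} with (a,b) = (1,−4)). -/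
def phiVec (x y : ℂ) : Fin 4 → ℂ :=
  ![x ^ 5, x ^ 4 * y - 4 * x ^ 2 * y ^ 3, -4 * x ^ 3 * y ^ 2 + x * y ^ 4, y ^ 5]

lemma phiVec_rep_ne_zero (t : P1) : phiVec (t.rep 0) (t.rep 1) ≠ 0 := by
  intro h
  apply t.rep_nonzero
  have h0 := congrFun h 0
  have h3 := congrFun h 3
  simp [phiVec] at h0 h3
  funext i
  fin_cases i
  · simpa using h0
  · simpa using h3

/-- The map φ : ℙ¹ → ℙ³ with image the rational quintic Γ₁ = C_{(1,−4)}. -/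
def phiP (t : P1) : P3 :=
  Projectivization.mk ℂ (phiVec (t.rep 0) (t.rep 1)) (phiVec_rep_ne_zero t)

/-- The line L₁ = {x₀ + x₂ = 0, x₃ + x₁ = 0} ⊂ ℙ³. -/
def lineL1 : Set P3 :=
  {p : P3 | p.rep 0 + p.rep 2 = 0 ∧ p.rep 3 + p.rep 1 = 0}

/-! ### Auxiliary material -/

open ComplexConjugate Module Submodule

lemma rep_not_both_zero (t : P1) : ¬ (t.rep 0 = 0 ∧ t.rep 1 = 0) := by
  rintro ⟨h0, h1⟩
  apply t.rep_nonzero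
  funext i; fin_cases i <;> assumption

lemma herm_ne (t : P1) : conj (t.rep 0) * t.rep 0 + conj (t.rep 1) * t.rep 1 ≠ 0 := by
  intro h
  apply rep_not_both_zero t
  have h' : ((Complex.normSq (t.rep 0) + Complex.normSq (t.rep 1) : ℝ) : ℂ) = 0 := by
    push_cast
    rw [Complex.normSq_eq_conj_mul_self, Complex.normSq_eq_conj_mul_self]
    exact h
  rw [Complex.ofReal_eq_zero] at h'
  have h0 : Complex.normSq (t.rep 0) = 0 := by
    nlinarith [Complex.normSq_nonneg (t.rep 0), Complex.normSq_nonneg (t.rep 1)]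
  have h1 : Complex.normSq (t.rep 1) = 0 := by
    nlinarith [Complex.normSq_nonneg (t.rep 0), Complex.normSq_nonneg (t.rep 1)]
  exact ⟨Complex.normSq_eq_zero.mp h0, Complex.normSq_eq_zero.mp h1⟩

/-- two distinct points of P1 have non-proportional representatives -/
lemma cross_ne (s t : P1) (h : s ≠ t) :
    s.rep 0 * t.rep 1 - t.rep 0 * s.rep 1 ≠ 0 := by
  intro hc
  apply h
  conv_lhs => rw [← s.mk_rep]
  conv_rhs => rw [← t.mk_rep]
  rw [Projectivization.mk_eq_mk_iff']
  by_cases hx : t.rep 0 = 0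
  · have hy : t.rep 1 ≠ 0 := fun hy => rep_not_both_zero t ⟨hx, hy⟩
    have hs0 : s.rep 0 = 0 := by
      have h2 : s.rep 0 * t.rep 1 = 0 := by rw [hx] at hc; linear_combination hc
      rcases mul_eq_zero.mp h2 with h' | h'
      · exact h'
      · exact absurd h' hy
    refine ⟨s.rep 1 / t.rep 1, ?_⟩
    funext i; fin_cases i
    · show s.rep 1 / t.rep 1 * t.rep 0 = s.rep 0
      rw [hx, hs0]; ring
    · show s.rep 1 / t.rep 1 * t.rep 1 = s.rep 1
      field_simp
  · refine ⟨s.rep 0 / t.rep 0, ?_⟩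
    funext i; fin_cases i
    · show s.rep 0 / t.rep 0 * t.rep 0 = s.rep 0
      field_simp
    · show s.rep 0 / t.rep 0 * t.rep 1 = s.rep 1
      rw [div_mul_eq_mul_div, div_eq_iff hx]
      linear_combination hc

lemma cross_ne' (s t : P1) (h : s ≠ t) :
    t.rep 1 * s.rep 0 - t.rep 0 * s.rep 1 ≠ 0 := by
  intro h'
  exact cross_ne s t h (by linear_combination h')

/-- the degree-5 "moment" vector -/
def mvec (x y : ℂ) : Fin 6 → ℂ := ![x^5, x^4*y, x^3*y^2, x^2*y^3, x*y^4, y^5]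

/-- the degree-5 coefficient vector of a linear form on ℂ⁴ pulled back through φ -/
def bigLam (l : Fin 4 → ℂ) : Fin 6 → ℂ := ![l 0, l 1, -4 * l 2, -4 * l 1, l 2, l 3]

/-- coefficient vector of (conj x·X + conj y·Y)²(q1·X − q0·Y)(r1·X − r0·Y)(s1·X − s0·Y) -/
def wvec (x y q0 q1 r0 r1 s0 s1 : ℂ) : Fin 6 → ℂ :=
  ![(conj x)^2*(q1*r1*s1),
    (conj x)^2*(-(q0*r1*s1 + r0*q1*s1 + s0*q1*r1)) + 2*(conj x)*(conj y)*(q1*r1*s1),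
    (conj x)^2*(q0*r0*s1 + q0*s0*r1 + r0*s0*q1)
      + 2*(conj x)*(conj y)*(-(q0*r1*s1 + r0*q1*s1 + s0*q1*r1)) + (conj y)^2*(q1*r1*s1),
    (conj x)^2*(-(q0*r0*s0)) + 2*(conj x)*(conj y)*(q0*r0*s1 + q0*s0*r1 + r0*s0*q1)
      + (conj y)^2*(-(q0*r1*s1 + r0*q1*s1 + s0*q1*r1)),
    2*(conj x)*(conj y)*(-(q0*r0*s0)) + (conj y)^2*(q0*r0*s1 + q0*s0*r1 + r0*s0*q1),
    (conj y)^2*(-(q0*r0*s0))]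

lemma wvec_dot (x y q0 q1 r0 r1 s0 s1 z w : ℂ) :
    ∑ j, mvec z w j * wvec x y q0 q1 r0 r1 s0 s1 j
      = (conj x * z + conj y * w)^2 *
        ((q1*z - q0*w) * ((r1*z - r0*w) * (s1*z - s0*w))) := by
  rw [Fin.sum_univ_six]
  show z^5 * ((conj x)^2*(q1*r1*s1))
      + z^4*w * ((conj x)^2*(-(q0*r1*s1 + r0*q1*s1 + s0*q1*r1)) + 2*(conj x)*(conj y)*(q1*r1*s1))
      + z^3*w^2 * ((conj x)^2*(q0*r0*s1 + q0*s0*r1 + r0*s0*q1)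
          + 2*(conj x)*(conj y)*(-(q0*r1*s1 + r0*q1*s1 + s0*q1*r1)) + (conj y)^2*(q1*r1*s1))
      + z^2*w^3 * ((conj x)^2*(-(q0*r0*s0)) + 2*(conj x)*(conj y)*(q0*r0*s1 + q0*s0*r1 + r0*s0*q1)
          + (conj y)^2*(-(q0*r1*s1 + r0*q1*s1 + s0*q1*r1)))
      + z*w^4 * (2*(conj x)*(conj y)*(-(q0*r0*s0)) + (conj y)^2*(q0*r0*s1 + q0*s0*r1 + r0*s0*q1))
      + w^5 * ((conj y)^2*(-(q0*r0*s0)))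
      = _
  ring

/-- impossibility: distinct roots of z⁴−4z²+1 never have equal fifth powers -/
lemma quintic_cert (u v : ℂ) (hu : u^4 - 4*u^2 + 1 = 0) (hv : v^4 - 4*v^2 + 1 = 0)
    (hg : u^4 + u^3*v + u^2*v^2 + u*v^3 + v^4 = 0) : False := by
  have h : (1 : ℂ) = 0 := by
    linear_combination
      ((644/1045 : ℂ) + (144/209)*v^2 + (-6989/1045)*v^4 + (1808/1045)*v^6 + (904/1045)*u*v
        + (-6989/1045)*u*v^3 + (1808/1045)*u*v^5 + (2692/1045)*u^2 + (-1494/209)*u^2*v^2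
        + (1808/1045)*u^2*v^4 + (-6751/1045)*u^3*v + (1808/1045)*u^3*v^3) * hu
      + ((401/1045 : ℂ) + (884/1045)*v^2 + (-904/1045)*u*v + (-6751/1045)*u*v^3
        + (-116/1045)*u^2 + (-238/1045)*u^2*v^2 + (243/1045)*u^3*v + (1808/1045)*u^3*v^3) * hv
      + ((10124/1045 : ℂ) + (-2692/1045)*v^2 + (-25216/1045)*u*v + (6751/1045)*u*v^3
        + (-2692/1045)*u^2 + (719/1045)*u^2*v^2 + (6751/1045)*u^3*v + (-1808/1045)*u^3*v^3) * hg
  exact one_ne_zero h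

/-- the coefficients of a product of four nonzero linear binary forms are not all zero -/
lemma coeffs_ne_zero (x1 y1 x2 y2 x3 y3 x4 y4 : ℂ)
    (h1 : ¬(x1 = 0 ∧ y1 = 0)) (h2 : ¬(x2 = 0 ∧ y2 = 0))
    (h3 : ¬(x3 = 0 ∧ y3 = 0)) (h4 : ¬(x4 = 0 ∧ y4 = 0))
    (ha : y1*y2*y3*y4 = 0)
    (hb : x1*y2*y3*y4 + x2*y1*y3*y4 + x3*y1*y2*y4 + x4*y1*y2*y3 = 0)
    (hc : x1*x2*y3*y4 + x1*x3*y2*y4 + x1*x4*y2*y3 + x2*x3*y1*y4 + x2*x4*y1*y3 + x3*x4*y1*y2 = 0)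
    (hd : x2*x3*x4*y1 + x1*x3*x4*y2 + x1*x2*x4*y3 + x1*x2*x3*y4 = 0)
    (he : x1*x2*x3*x4 = 0) : False := by
  classical
  have key : ∀ x y : ℂ, ¬(x = 0 ∧ y = 0) →
      (Polynomial.C y - Polynomial.C x * Polynomial.X : Polynomial ℂ) ≠ 0 := by
    intro x y hxy h0
    apply hxy
    constructor
    · have h1' := congrArg (Polynomial.coeff · 1) h0
      simpa using h1'
    · have h0' := congrArg (Polynomial.coeff · 0) h0
      simpa using h0'
  have hP : (Polynomial.C y1 - Polynomial.C x1 * Polynomial.X) *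
      ((Polynomial.C y2 - Polynomial.C x2 * Polynomial.X) *
       ((Polynomial.C y3 - Polynomial.C x3 * Polynomial.X) *
        (Polynomial.C y4 - Polynomial.C x4 * Polynomial.X))) ≠ (0 : Polynomial ℂ) :=
    mul_ne_zero (key _ _ h1) (mul_ne_zero (key _ _ h2)
      (mul_ne_zero (key _ _ h3) (key _ _ h4)))
  apply hP
  apply Polynomial.funext
  intro z
  simp only [Polynomial.eval_mul, Polynomial.eval_sub, Polynomial.eval_C, Polynomial.eval_X,
    Polynomial.eval_zero]
  linear_combination ha - z*hb + z^2*hc - z^3*hd + z^4*he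

set_option maxHeartbeats 1600000 in
/-- L₁ is the unique quadrisecant line of Γ₁: any line of ℙ³ containing the
images of four distinct points of ℙ¹ under φ equals L₁. -/
theorem stmt7 (L : Set P3) (hL : IsLine L) (t1 t2 t3 t4 : P1)
    (h12 : t1 ≠ t2) (h13 : t1 ≠ t3) (h14 : t1 ≠ t4)
    (h23 : t2 ≠ t3) (h24 : t2 ≠ t4) (h34 : t3 ≠ t4)
    (m1 : phiP t1 ∈ L) (m2 : phiP t2 ∈ L) (m3 : phiP t3 ∈ L) (m4 : phiP t4 ∈ L) :
    L = lineL1 := by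
  classical
  obtain ⟨W, hWrank, hLW⟩ := hL
  set x1 := t1.rep 0 with hx1d; set y1 := t1.rep 1 with hy1d
  set x2 := t2.rep 0 with hx2d; set y2 := t2.rep 1 with hy2d
  set x3 := t3.rep 0 with hx3d; set y3 := t3.rep 1 with hy3d
  set x4 := t4.rep 0 with hx4d; set y4 := t4.rep 1 with hy4d
  -- the four curve vectors lie in W
  have hvW : ∀ t : P1, phiP t ∈ L → phiVec (t.rep 0) (t.rep 1) ∈ W := by
    intro t ht
    rw [hLW] at ht
    have h' : (phiP t).submodule ≤ W := ht
    rw [phiP, Projectivization.submodule_mk] at h'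
    exact h' (Submodule.mem_span_singleton_self _)
  have hv1 : phiVec x1 y1 ∈ W := hvW t1 m1
  have hv2 : phiVec x2 y2 ∈ W := hvW t2 m2
  have hv3 : phiVec x3 y3 ∈ W := hvW t3 m3
  have hv4 : phiVec x4 y4 ∈ W := hvW t4 m4
  -- functionals cutting out W
  have hQrank : finrank ℂ ((Fin 4 → ℂ) ⧸ W) = 2 := by
    have h := Submodule.finrank_quotient_add_finrank W
    rw [hWrank] at h
    have h4 : finrank ℂ (Fin 4 → ℂ) = 4 := by
      simp [Module.finrank_pi]
    omega
  set B : Basis (Fin 2) ℂ ((Fin 4 → ℂ) ⧸ W) := Module.finBasisOfFinrankEq ℂ _ hQrank with hB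
  set lam : Fin 2 → ((Fin 4 → ℂ) →ₗ[ℂ] ℂ) := fun i => (B.coord i).comp W.mkQ with hlam
  have hmemW : ∀ v : Fin 4 → ℂ, (∀ i, lam i v = 0) ↔ v ∈ W := by
    intro v
    constructor
    · intro h
      have h' : ∀ i, B.coord i (W.mkQ v) = 0 := by
        intro i; simpa [hlam] using h i
      have hz : W.mkQ v = 0 := (B.forall_coord_eq_zero_iff).mp h'
      rwa [Submodule.mkQ_apply, Submodule.Quotient.mk_eq_zero] at hz
    · intro h i
      have hz : W.mkQ v = 0 := by
        rwa [Submodule.mkQ_apply, Submodule.Quotient.mk_eq_zero]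
      simp [hlam, hz]
  have hlam_indep : ∀ a b : ℂ, (∀ v, a * lam 0 v + b * lam 1 v = 0) → a = 0 ∧ b = 0 := by
    intro a b h
    obtain ⟨v0, hv0⟩ := W.mkQ_surjective (B 0)
    obtain ⟨w0, hw0⟩ := W.mkQ_surjective (B 1)
    have e0 := h v0
    have e1 := h w0
    simp [hlam, hv0, hw0, Basis.coord_apply, Basis.repr_self] at e0 e1
    exact ⟨e0, e1⟩
  -- coordinate vectors of the functionals
  set lv : Fin 2 → Fin 4 → ℂ := fun i j => lam i (fun k => if j = k then 1 else 0) with hlv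
  have hexp : ∀ (i : Fin 2) (v : Fin 4 → ℂ), lam i v = ∑ j, v j * lv i j := by
    intro i v
    conv_lhs => rw [pi_eq_sum_univ v]
    rw [map_sum]
    congr 1
    funext j
    simp only [map_smul, smul_eq_mul, hlv]
  -- orthogonality relations
  have orth : ∀ (i : Fin 2) (x y : ℂ), phiVec x y ∈ W →
      x^5 * lv i 0 + (x^4*y - 4*x^2*y^3) * lv i 1 + (-4*x^3*y^2 + x*y^4) * lv i 2
        + y^5 * lv i 3 = 0 := by
    intro i x y hmem
    have h0 : lam i (phiVec x y) = 0 := (hmemW _).mpr hmem i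
    rw [hexp, Fin.sum_univ_four] at h0
    exact h0
  -- the matrix of moment vectors
  set M : Matrix (Fin 4) (Fin 6) ℂ :=
    Matrix.of ![mvec x1 y1, mvec x2 y2, mvec x3 y3, mvec x4 y4] with hM
  set Psi : (Fin 6 → ℂ) →ₗ[ℂ] (Fin 4 → ℂ) := M.mulVecLin with hPsi
  have hPsiApp : ∀ (v : Fin 6 → ℂ) (j : Fin 4), Psi v j = ∑ k, M j k * v k := by
    intro v j
    simp [hPsi, Matrix.mulVecLin_apply, Matrix.mulVec, dotProduct]
  have row0 : ∀ c : Fin 6 → ℂ, Psi c 0 = ∑ k, mvec x1 y1 k * c k := by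
    intro c; rw [hPsiApp, hM]; rfl
  have row1 : ∀ c : Fin 6 → ℂ, Psi c 1 = ∑ k, mvec x2 y2 k * c k := by
    intro c; rw [hPsiApp, hM]; rfl
  have row2 : ∀ c : Fin 6 → ℂ, Psi c 2 = ∑ k, mvec x3 y3 k * c k := by
    intro c; rw [hPsiApp, hM]; rfl
  have row3 : ∀ c : Fin 6 → ℂ, Psi c 3 = ∑ k, mvec x4 y4 k * c k := by
    intro c; rw [hPsiApp, hM]; rfl
  -- nonvanishing quantities
  have hd1 : (conj x1 * x1 + conj y1 * y1) ≠ 0 := herm_ne t1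
  have hd2 : (conj x2 * x2 + conj y2 * y2) ≠ 0 := herm_ne t2
  have hd3 : (conj x3 * x3 + conj y3 * y3) ≠ 0 := herm_ne t3
  have hd4 : (conj x4 * x4 + conj y4 * y4) ≠ 0 := herm_ne t4
  have c12 : x1*y2 - x2*y1 ≠ 0 := cross_ne t1 t2 h12
  have c13 : x1*y3 - x3*y1 ≠ 0 := cross_ne t1 t3 h13
  have c14 : x1*y4 - x4*y1 ≠ 0 := cross_ne t1 t4 h14
  have c23 : x2*y3 - x3*y2 ≠ 0 := cross_ne t2 t3 h23
  have c24 : x2*y4 - x4*y2 ≠ 0 := cross_ne t2 t4 h24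
  have c34 : x3*y4 - x4*y3 ≠ 0 := cross_ne t3 t4 h34
  have c21 : x2*y1 - x1*y2 ≠ 0 := cross_ne t2 t1 h12.symm
  have c31 : x3*y1 - x1*y3 ≠ 0 := cross_ne t3 t1 h13.symm
  have c41 : x4*y1 - x1*y4 ≠ 0 := cross_ne t4 t1 h14.symm
  have c32 : x3*y2 - x2*y3 ≠ 0 := cross_ne t3 t2 h23.symm
  have c42 : x4*y2 - x2*y4 ≠ 0 := cross_ne t4 t2 h24.symm
  have c43 : x4*y3 - x3*y4 ≠ 0 := cross_ne t4 t3 h34.symm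
  -- the dual family
  have hw10 : Psi (wvec x1 y1 x2 y2 x3 y3 x4 y4) 0 =
      (conj x1 * x1 + conj y1 * y1)^2 * ((x1*y2 - x2*y1) * ((x1*y3 - x3*y1) * (x1*y4 - x4*y1))) := by
    rw [row0, wvec_dot]; ring
  have hw11 : Psi (wvec x1 y1 x2 y2 x3 y3 x4 y4) 1 = 0 := by
    rw [row1, wvec_dot]; ring
  have hw12 : Psi (wvec x1 y1 x2 y2 x3 y3 x4 y4) 2 = 0 := by
    rw [row2, wvec_dot]; ring
  have hw13 : Psi (wvec x1 y1 x2 y2 x3 y3 x4 y4) 3 = 0 := by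
    rw [row3, wvec_dot]; ring
  have hw20 : Psi (wvec x2 y2 x1 y1 x3 y3 x4 y4) 0 = 0 := by
    rw [row0, wvec_dot]; ring
  have hw21 : Psi (wvec x2 y2 x1 y1 x3 y3 x4 y4) 1 =
      (conj x2 * x2 + conj y2 * y2)^2 * ((x2*y1 - x1*y2) * ((x2*y3 - x3*y2) * (x2*y4 - x4*y2))) := by
    rw [row1, wvec_dot]; ring
  have hw22 : Psi (wvec x2 y2 x1 y1 x3 y3 x4 y4) 2 = 0 := by
    rw [row2, wvec_dot]; ring
  have hw23 : Psi (wvec x2 y2 x1 y1 x3 y3 x4 y4) 3 = 0 := by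
    rw [row3, wvec_dot]; ring
  have hw30 : Psi (wvec x3 y3 x1 y1 x2 y2 x4 y4) 0 = 0 := by
    rw [row0, wvec_dot]; ring
  have hw31 : Psi (wvec x3 y3 x1 y1 x2 y2 x4 y4) 1 = 0 := by
    rw [row1, wvec_dot]; ring
  have hw32 : Psi (wvec x3 y3 x1 y1 x2 y2 x4 y4) 2 =
      (conj x3 * x3 + conj y3 * y3)^2 * ((x3*y1 - x1*y3) * ((x3*y2 - x2*y3) * (x3*y4 - x4*y3))) := by
    rw [row2, wvec_dot]; ring
  have hw33 : Psi (wvec x3 y3 x1 y1 x2 y2 x4 y4) 3 = 0 := by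
    rw [row3, wvec_dot]; ring
  have hw40 : Psi (wvec x4 y4 x1 y1 x2 y2 x3 y3) 0 = 0 := by
    rw [row0, wvec_dot]; ring
  have hw41 : Psi (wvec x4 y4 x1 y1 x2 y2 x3 y3) 1 = 0 := by
    rw [row1, wvec_dot]; ring
  have hw42 : Psi (wvec x4 y4 x1 y1 x2 y2 x3 y3) 2 = 0 := by
    rw [row2, wvec_dot]; ring
  have hw43 : Psi (wvec x4 y4 x1 y1 x2 y2 x3 y3) 3 =
      (conj x4 * x4 + conj y4 * y4)^2 * ((x4*y1 - x1*y4) * ((x4*y2 - x2*y4) * (x4*y3 - x3*y4))) := by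
    rw [row3, wvec_dot]; ring
  set dd1 := (conj x1 * x1 + conj y1 * y1)^2 *
      ((x1*y2 - x2*y1) * ((x1*y3 - x3*y1) * (x1*y4 - x4*y1))) with hdd1d
  set dd2 := (conj x2 * x2 + conj y2 * y2)^2 *
      ((x2*y1 - x1*y2) * ((x2*y3 - x3*y2) * (x2*y4 - x4*y2))) with hdd2d
  set dd3 := (conj x3 * x3 + conj y3 * y3)^2 *
      ((x3*y1 - x1*y3) * ((x3*y2 - x2*y3) * (x3*y4 - x4*y3))) with hdd3d
  set dd4 := (conj x4 * x4 + conj y4 * y4)^2 *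
      ((x4*y1 - x1*y4) * ((x4*y2 - x2*y4) * (x4*y3 - x3*y4))) with hdd4d
  have hdd1 : dd1 ≠ 0 := by
    rw [hdd1d]
    exact mul_ne_zero (pow_ne_zero 2 hd1) (mul_ne_zero c12 (mul_ne_zero c13 c14))
  have hdd2 : dd2 ≠ 0 := by
    rw [hdd2d]
    exact mul_ne_zero (pow_ne_zero 2 hd2) (mul_ne_zero c21 (mul_ne_zero c23 c24))
  have hdd3 : dd3 ≠ 0 := by
    rw [hdd3d]
    exact mul_ne_zero (pow_ne_zero 2 hd3) (mul_ne_zero c31 (mul_ne_zero c32 c34))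
  have hdd4 : dd4 ≠ 0 := by
    rw [hdd4d]
    exact mul_ne_zero (pow_ne_zero 2 hd4) (mul_ne_zero c41 (mul_ne_zero c42 c43))
  -- surjectivity of Psi
  have hsurj : Function.Surjective Psi := by
    intro u
    set X := (u 0 / dd1) • wvec x1 y1 x2 y2 x3 y3 x4 y4
      + (u 1 / dd2) • wvec x2 y2 x1 y1 x3 y3 x4 y4
      + (u 2 / dd3) • wvec x3 y3 x1 y1 x2 y2 x4 y4
      + (u 3 / dd4) • wvec x4 y4 x1 y1 x2 y2 x3 y3 with hXd
    refine ⟨X, ?_⟩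
    have hPsiX : Psi X
        = (u 0 / dd1) • Psi (wvec x1 y1 x2 y2 x3 y3 x4 y4)
        + (u 1 / dd2) • Psi (wvec x2 y2 x1 y1 x3 y3 x4 y4)
        + (u 2 / dd3) • Psi (wvec x3 y3 x1 y1 x2 y2 x4 y4)
        + (u 3 / dd4) • Psi (wvec x4 y4 x1 y1 x2 y2 x3 y3) := by
      rw [hXd]
      simp only [map_add, map_smul]
    funext j
    have hcomp := congrFun hPsiX j
    fin_cases j
    · have h' : Psi X 0 = u 0 / dd1 * Psi (wvec x1 y1 x2 y2 x3 y3 x4 y4) 0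
          + u 1 / dd2 * Psi (wvec x2 y2 x1 y1 x3 y3 x4 y4) 0
          + u 2 / dd3 * Psi (wvec x3 y3 x1 y1 x2 y2 x4 y4) 0
          + u 3 / dd4 * Psi (wvec x4 y4 x1 y1 x2 y2 x3 y3) 0 := hcomp
      have h'' : Psi X 0 = u 0 := by
        rw [h', hw10, hw20, hw30, hw40]
        simp only [mul_zero, add_zero]
        exact div_mul_cancel₀ _ hdd1
      exact h''
    · have h' : Psi X 1 = u 0 / dd1 * Psi (wvec x1 y1 x2 y2 x3 y3 x4 y4) 1
          + u 1 / dd2 * Psi (wvec x2 y2 x1 y1 x3 y3 x4 y4) 1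
          + u 2 / dd3 * Psi (wvec x3 y3 x1 y1 x2 y2 x4 y4) 1
          + u 3 / dd4 * Psi (wvec x4 y4 x1 y1 x2 y2 x3 y3) 1 := hcomp
      have h'' : Psi X 1 = u 1 := by
        rw [h', hw11, hw21, hw31, hw41]
        simp only [mul_zero, add_zero, zero_add]
        exact div_mul_cancel₀ _ hdd2
      exact h''
    · have h' : Psi X 2 = u 0 / dd1 * Psi (wvec x1 y1 x2 y2 x3 y3 x4 y4) 2
          + u 1 / dd2 * Psi (wvec x2 y2 x1 y1 x3 y3 x4 y4) 2
          + u 2 / dd3 * Psi (wvec x3 y3 x1 y1 x2 y2 x4 y4) 2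
          + u 3 / dd4 * Psi (wvec x4 y4 x1 y1 x2 y2 x3 y3) 2 := hcomp
      have h'' : Psi X 2 = u 2 := by
        rw [h', hw12, hw22, hw32, hw42]
        simp only [mul_zero, add_zero, zero_add]
        exact div_mul_cancel₀ _ hdd3
      exact h''
    · have h' : Psi X 3 = u 0 / dd1 * Psi (wvec x1 y1 x2 y2 x3 y3 x4 y4) 3
          + u 1 / dd2 * Psi (wvec x2 y2 x1 y1 x3 y3 x4 y4) 3
          + u 2 / dd3 * Psi (wvec x3 y3 x1 y1 x2 y2 x4 y4) 3
          + u 3 / dd4 * Psi (wvec x4 y4 x1 y1 x2 y2 x3 y3) 3 := hcomp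
      have h'' : Psi X 3 = u 3 := by
        rw [h', hw13, hw23, hw33, hw43]
        simp only [mul_zero, add_zero, zero_add]
        exact div_mul_cancel₀ _ hdd4
      exact h''
  have hkerPsi : finrank ℂ (LinearMap.ker Psi) = 2 := by
    have hrn := LinearMap.finrank_range_add_finrank_ker Psi
    rw [LinearMap.range_eq_top.mpr hsurj, finrank_top] at hrn
    simp only [Module.finrank_pi, Fintype.card_fin] at hrn
    omega
  -- the two pullback coefficient vectors lie in ker Psi
  have hKmem : ∀ i : Fin 2, bigLam (lv i) ∈ LinearMap.ker Psi := by
    intro i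
    rw [LinearMap.mem_ker]
    have e1 := orth i x1 y1 hv1
    have e2 := orth i x2 y2 hv2
    have e3 := orth i x3 y3 hv3
    have e4 := orth i x4 y4 hv4
    funext j
    fin_cases j
    · show Psi (bigLam (lv i)) 0 = 0
      rw [row0, Fin.sum_univ_six]
      show x1^5 * (lv i 0) + x1^4*y1 * (lv i 1) + x1^3*y1^2 * (-4 * lv i 2)
        + x1^2*y1^3 * (-4 * lv i 1) + x1*y1^4 * (lv i 2) + y1^5 * (lv i 3) = 0
      linear_combination e1
    · show Psi (bigLam (lv i)) 1 = 0
      rw [row1, Fin.sum_univ_six]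
      show x2^5 * (lv i 0) + x2^4*y2 * (lv i 1) + x2^3*y2^2 * (-4 * lv i 2)
        + x2^2*y2^3 * (-4 * lv i 1) + x2*y2^4 * (lv i 2) + y2^5 * (lv i 3) = 0
      linear_combination e2
    · show Psi (bigLam (lv i)) 2 = 0
      rw [row2, Fin.sum_univ_six]
      show x3^5 * (lv i 0) + x3^4*y3 * (lv i 1) + x3^3*y3^2 * (-4 * lv i 2)
        + x3^2*y3^3 * (-4 * lv i 1) + x3*y3^4 * (lv i 2) + y3^5 * (lv i 3) = 0
      linear_combination e3
    · show Psi (bigLam (lv i)) 3 = 0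
      rw [row3, Fin.sum_univ_six]
      show x4^5 * (lv i 0) + x4^4*y4 * (lv i 1) + x4^3*y4^2 * (-4 * lv i 2)
        + x4^2*y4^3 * (-4 * lv i 1) + x4*y4^4 * (lv i 2) + y4^5 * (lv i 3) = 0
      linear_combination e4
  -- the two q-shift vectors lie in ker Psi
  have hQ1mem : (![y1*y2*y3*y4,
      -(x1*y2*y3*y4 + x2*y1*y3*y4 + x3*y1*y2*y4 + x4*y1*y2*y3),
      x1*x2*y3*y4 + x1*x3*y2*y4 + x1*x4*y2*y3 + x2*x3*y1*y4 + x2*x4*y1*y3 + x3*x4*y1*y2,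
      -(x2*x3*x4*y1 + x1*x3*x4*y2 + x1*x2*x4*y3 + x1*x2*x3*y4),
      x1*x2*x3*x4, 0] : Fin 6 → ℂ) ∈ LinearMap.ker Psi := by
    rw [LinearMap.mem_ker]
    funext j
    fin_cases j
    · show Psi _ 0 = 0
      rw [row0, Fin.sum_univ_six]
      show x1^5 * (y1*y2*y3*y4)
        + x1^4*y1 * (-(x1*y2*y3*y4 + x2*y1*y3*y4 + x3*y1*y2*y4 + x4*y1*y2*y3))
        + x1^3*y1^2 * (x1*x2*y3*y4 + x1*x3*y2*y4 + x1*x4*y2*y3 + x2*x3*y1*y4 + x2*x4*y1*y3 + x3*x4*y1*y2)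
        + x1^2*y1^3 * (-(x2*x3*x4*y1 + x1*x3*x4*y2 + x1*x2*x4*y3 + x1*x2*x3*y4))
        + x1*y1^4 * (x1*x2*x3*x4) + y1^5 * 0 = 0
      ring
    · show Psi _ 1 = 0
      rw [row1, Fin.sum_univ_six]
      show x2^5 * (y1*y2*y3*y4)
        + x2^4*y2 * (-(x1*y2*y3*y4 + x2*y1*y3*y4 + x3*y1*y2*y4 + x4*y1*y2*y3))
        + x2^3*y2^2 * (x1*x2*y3*y4 + x1*x3*y2*y4 + x1*x4*y2*y3 + x2*x3*y1*y4 + x2*x4*y1*y3 + x3*x4*y1*y2)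
        + x2^2*y2^3 * (-(x2*x3*x4*y1 + x1*x3*x4*y2 + x1*x2*x4*y3 + x1*x2*x3*y4))
        + x2*y2^4 * (x1*x2*x3*x4) + y2^5 * 0 = 0
      ring
    · show Psi _ 2 = 0
      rw [row2, Fin.sum_univ_six]
      show x3^5 * (y1*y2*y3*y4)
        + x3^4*y3 * (-(x1*y2*y3*y4 + x2*y1*y3*y4 + x3*y1*y2*y4 + x4*y1*y2*y3))
        + x3^3*y3^2 * (x1*x2*y3*y4 + x1*x3*y2*y4 + x1*x4*y2*y3 + x2*x3*y1*y4 + x2*x4*y1*y3 + x3*x4*y1*y2)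
        + x3^2*y3^3 * (-(x2*x3*x4*y1 + x1*x3*x4*y2 + x1*x2*x4*y3 + x1*x2*x3*y4))
        + x3*y3^4 * (x1*x2*x3*x4) + y3^5 * 0 = 0
      ring
    · show Psi _ 3 = 0
      rw [row3, Fin.sum_univ_six]
      show x4^5 * (y1*y2*y3*y4)
        + x4^4*y4 * (-(x1*y2*y3*y4 + x2*y1*y3*y4 + x3*y1*y2*y4 + x4*y1*y2*y3))
        + x4^3*y4^2 * (x1*x2*y3*y4 + x1*x3*y2*y4 + x1*x4*y2*y3 + x2*x3*y1*y4 + x2*x4*y1*y3 + x3*x4*y1*y2)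
        + x4^2*y4^3 * (-(x2*x3*x4*y1 + x1*x3*x4*y2 + x1*x2*x4*y3 + x1*x2*x3*y4))
        + x4*y4^4 * (x1*x2*x3*x4) + y4^5 * 0 = 0
      ring
  have hQ2mem : (![0, y1*y2*y3*y4,
      -(x1*y2*y3*y4 + x2*y1*y3*y4 + x3*y1*y2*y4 + x4*y1*y2*y3),
      x1*x2*y3*y4 + x1*x3*y2*y4 + x1*x4*y2*y3 + x2*x3*y1*y4 + x2*x4*y1*y3 + x3*x4*y1*y2,
      -(x2*x3*x4*y1 + x1*x3*x4*y2 + x1*x2*x4*y3 + x1*x2*x3*y4),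
      x1*x2*x3*x4] : Fin 6 → ℂ) ∈ LinearMap.ker Psi := by
    rw [LinearMap.mem_ker]
    funext j
    fin_cases j
    · show Psi _ 0 = 0
      rw [row0, Fin.sum_univ_six]
      show x1^5 * 0 + x1^4*y1 * (y1*y2*y3*y4)
        + x1^3*y1^2 * (-(x1*y2*y3*y4 + x2*y1*y3*y4 + x3*y1*y2*y4 + x4*y1*y2*y3))
        + x1^2*y1^3 * (x1*x2*y3*y4 + x1*x3*y2*y4 + x1*x4*y2*y3 + x2*x3*y1*y4 + x2*x4*y1*y3 + x3*x4*y1*y2)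
        + x1*y1^4 * (-(x2*x3*x4*y1 + x1*x3*x4*y2 + x1*x2*x4*y3 + x1*x2*x3*y4))
        + y1^5 * (x1*x2*x3*x4) = 0
      ring
    · show Psi _ 1 = 0
      rw [row1, Fin.sum_univ_six]
      show x2^5 * 0 + x2^4*y2 * (y1*y2*y3*y4)
        + x2^3*y2^2 * (-(x1*y2*y3*y4 + x2*y1*y3*y4 + x3*y1*y2*y4 + x4*y1*y2*y3))
        + x2^2*y2^3 * (x1*x2*y3*y4 + x1*x3*y2*y4 + x1*x4*y2*y3 + x2*x3*y1*y4 + x2*x4*y1*y3 + x3*x4*y1*y2)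
        + x2*y2^4 * (-(x2*x3*x4*y1 + x1*x3*x4*y2 + x1*x2*x4*y3 + x1*x2*x3*y4))
        + y2^5 * (x1*x2*x3*x4) = 0
      ring
    · show Psi _ 2 = 0
      rw [row2, Fin.sum_univ_six]
      show x3^5 * 0 + x3^4*y3 * (y1*y2*y3*y4)
        + x3^3*y3^2 * (-(x1*y2*y3*y4 + x2*y1*y3*y4 + x3*y1*y2*y4 + x4*y1*y2*y3))
        + x3^2*y3^3 * (x1*x2*y3*y4 + x1*x3*y2*y4 + x1*x4*y2*y3 + x2*x3*y1*y4 + x2*x4*y1*y3 + x3*x4*y1*y2)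
        + x3*y3^4 * (-(x2*x3*x4*y1 + x1*x3*x4*y2 + x1*x2*x4*y3 + x1*x2*x3*y4))
        + y3^5 * (x1*x2*x3*x4) = 0
      ring
    · show Psi _ 3 = 0
      rw [row3, Fin.sum_univ_six]
      show x4^5 * 0 + x4^4*y4 * (y1*y2*y3*y4)
        + x4^3*y4^2 * (-(x1*y2*y3*y4 + x2*y1*y3*y4 + x3*y1*y2*y4 + x4*y1*y2*y3))
        + x4^2*y4^3 * (x1*x2*y3*y4 + x1*x3*y2*y4 + x1*x4*y2*y3 + x2*x3*y1*y4 + x2*x4*y1*y3 + x3*x4*y1*y2)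
        + x4*y4^4 * (-(x2*x3*x4*y1 + x1*x3*x4*y2 + x1*x2*x4*y3 + x1*x2*x3*y4))
        + y4^5 * (x1*x2*x3*x4) = 0
      ring
  -- the two pullback vectors are independent and span the kernel
  have hKind : LinearIndependent ℂ ![bigLam (lv 0), bigLam (lv 1)] := by
    rw [LinearIndependent.pair_iff]
    intro s t hst
    have hA : s * lv 0 0 + t * lv 1 0 = 0 := congrFun hst 0
    have hB : s * lv 0 1 + t * lv 1 1 = 0 := congrFun hst 1
    have hC : s * lv 0 2 + t * lv 1 2 = 0 := congrFun hst 4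
    have hD : s * lv 0 3 + t * lv 1 3 = 0 := congrFun hst 5
    apply hlam_indep
    intro v
    rw [hexp, hexp, Fin.sum_univ_four, Fin.sum_univ_four]
    linear_combination v 0 * hA + v 1 * hB + v 2 * hC + v 3 * hD
  have hKspan : Submodule.span ℂ (Set.range ![bigLam (lv 0), bigLam (lv 1)])
      = LinearMap.ker Psi := by
    apply Submodule.eq_of_le_of_finrank_eq
    · rw [Submodule.span_le]
      rintro v ⟨i, rfl⟩
      fin_cases i
      · exact hKmem 0
      · exact hKmem 1
    · rw [finrank_span_eq_card hKind, hkerPsi]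
      simp
  -- express the q-shift vectors through the pullback vectors and get relations
  have hQ1sp := hKspan ▸ hQ1mem
  have hQ2sp := hKspan ▸ hQ2mem
  rw [mem_span_range_iff_exists_fun, ] at hQ1sp hQ2sp
  obtain ⟨c, hc⟩ := hQ1sp
  obtain ⟨d, hd⟩ := hQ2sp
  rw [Fin.sum_univ_two] at hc hd
  have hc1 : c 0 * lv 0 1 + c 1 * lv 1 1
      = -(x1*y2*y3*y4 + x2*y1*y3*y4 + x3*y1*y2*y4 + x4*y1*y2*y3) := congrFun hc 1
  have hc2 : c 0 * (-4 * lv 0 2) + c 1 * (-4 * lv 1 2)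
      = x1*x2*y3*y4 + x1*x3*y2*y4 + x1*x4*y2*y3 + x2*x3*y1*y4 + x2*x4*y1*y3 + x3*x4*y1*y2 :=
    congrFun hc 2
  have hc3 : c 0 * (-4 * lv 0 1) + c 1 * (-4 * lv 1 1)
      = -(x2*x3*x4*y1 + x1*x3*x4*y2 + x1*x2*x4*y3 + x1*x2*x3*y4) := congrFun hc 3
  have hc4 : c 0 * lv 0 2 + c 1 * lv 1 2 = x1*x2*x3*x4 := congrFun hc 4
  have hd1' : d 0 * lv 0 1 + d 1 * lv 1 1 = y1*y2*y3*y4 := congrFun hd 1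
  have hd2' : d 0 * (-4 * lv 0 2) + d 1 * (-4 * lv 1 2)
      = -(x1*y2*y3*y4 + x2*y1*y3*y4 + x3*y1*y2*y4 + x4*y1*y2*y3) := congrFun hd 2
  have hd3' : d 0 * (-4 * lv 0 1) + d 1 * (-4 * lv 1 1)
      = x1*x2*y3*y4 + x1*x3*y2*y4 + x1*x4*y2*y3 + x2*x3*y1*y4 + x2*x4*y1*y3 + x3*x4*y1*y2 :=
    congrFun hd 3
  have hd4' : d 0 * lv 0 2 + d 1 * lv 1 2
      = -(x2*x3*x4*y1 + x1*x3*x4*y2 + x1*x2*x4*y3 + x1*x2*x3*y4) := congrFun hd 4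
  -- coefficient relations
  have r1 : (x1*x2*y3*y4 + x1*x3*y2*y4 + x1*x4*y2*y3 + x2*x3*y1*y4 + x2*x4*y1*y3 + x3*x4*y1*y2)
      + 4 * (x1*x2*x3*x4) = 0 := by linear_combination -hc2 - 4*hc4
  have r2 : -(x2*x3*x4*y1 + x1*x3*x4*y2 + x1*x2*x4*y3 + x1*x2*x3*y4)
      + 4 * (-(x1*y2*y3*y4 + x2*y1*y3*y4 + x3*y1*y2*y4 + x4*y1*y2*y3)) = 0 := by
    linear_combination -hc3 - 4*hc1
  have r3 : (x1*x2*y3*y4 + x1*x3*y2*y4 + x1*x4*y2*y3 + x2*x3*y1*y4 + x2*x4*y1*y3 + x3*x4*y1*y2)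
      + 4 * (y1*y2*y3*y4) = 0 := by linear_combination -hd3' - 4*hd1'
  have r4 : -(x1*y2*y3*y4 + x2*y1*y3*y4 + x3*y1*y2*y4 + x4*y1*y2*y3)
      + 4 * (-(x2*x3*x4*y1 + x1*x3*x4*y2 + x1*x2*x4*y3 + x1*x2*x3*y4)) = 0 := by
    linear_combination -hd2' - 4*hd4'
  have hqb : x1*y2*y3*y4 + x2*y1*y3*y4 + x3*y1*y2*y4 + x4*y1*y2*y3 = 0 := by
    linear_combination (r4 - 4*r2) / 15
  have hqd : x2*x3*x4*y1 + x1*x3*x4*y2 + x1*x2*x4*y3 + x1*x2*x3*y4 = 0 := by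
    linear_combination (r2 - 4*r4) / 15
  have hae : y1*y2*y3*y4 = x1*x2*x3*x4 := by
    linear_combination (r3 - r1)/4
  have hqc : x1*x2*y3*y4 + x1*x3*y2*y4 + x1*x4*y2*y3 + x2*x3*y1*y4 + x2*x4*y1*y3 + x3*x4*y1*y2
      = -4 * (y1*y2*y3*y4) := by linear_combination r3
  have hqa : y1*y2*y3*y4 ≠ 0 := by
    intro h0
    refine coeffs_ne_zero x1 y1 x2 y2 x3 y3 x4 y4 (rep_not_both_zero t1) (rep_not_both_zero t2)
      (rep_not_both_zero t3) (rep_not_both_zero t4) h0 hqb ?_ hqd ?_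
    · linear_combination hqc - 4*h0
    · linear_combination -hae + h0
  -- all four points are roots of x⁴ − 4x²y² + y⁴
  have hqroot : ∀ x y : ℂ, (y1*x - x1*y)*((y2*x - x2*y)*((y3*x - x3*y)*(y4*x - x4*y)))
      = (y1*y2*y3*y4)*x^4
        + (-(x1*y2*y3*y4 + x2*y1*y3*y4 + x3*y1*y2*y4 + x4*y1*y2*y3))*x^3*y
        + (x1*x2*y3*y4 + x1*x3*y2*y4 + x1*x4*y2*y3 + x2*x3*y1*y4 + x2*x4*y1*y3 + x3*x4*y1*y2)*x^2*y^2
        + (-(x2*x3*x4*y1 + x1*x3*x4*y2 + x1*x2*x4*y3 + x1*x2*x3*y4))*x*y^3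
        + (x1*x2*x3*x4)*y^4 := by
    intro x y; ring
  have root : ∀ x y : ℂ, (y1*x - x1*y)*((y2*x - x2*y)*((y3*x - x3*y)*(y4*x - x4*y))) = 0 →
      x^4 - 4*x^2*y^2 + y^4 = 0 := by
    intro x y hz
    have e : (y1*y2*y3*y4)*x^4
        + (-(x1*y2*y3*y4 + x2*y1*y3*y4 + x3*y1*y2*y4 + x4*y1*y2*y3))*x^3*y
        + (x1*x2*y3*y4 + x1*x3*y2*y4 + x1*x4*y2*y3 + x2*x3*y1*y4 + x2*x4*y1*y3 + x3*x4*y1*y2)*x^2*y^2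
        + (-(x2*x3*x4*y1 + x1*x3*x4*y2 + x1*x2*x4*y3 + x1*x2*x3*y4))*x*y^3
        + (x1*x2*x3*x4)*y^4 = 0 := by rw [← hqroot]; exact hz
    have e2 : (y1*y2*y3*y4) * (x^4 - 4*x^2*y^2 + y^4) = 0 := by
      linear_combination e + x^3*y*hqb - x^2*y^2*hqc + x*y^3*hqd + y^4*hae
    rcases mul_eq_zero.mp e2 with h | h
    · exact absurd h hqa
    · exact h
  have root1 : x1^4 - 4*x1^2*y1^2 + y1^4 = 0 := root x1 y1 (by ring)
  have root2 : x2^4 - 4*x2^2*y2^2 + y2^4 = 0 := root x2 y2 (by ring)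
  -- x-coordinates nonzero
  have hx1 : x1 ≠ 0 := by
    intro h
    apply rep_not_both_zero t1
    refine ⟨h, ?_⟩
    have h' := root1
    rw [h] at h'
    simpa using h'
  have hx2 : x2 ≠ 0 := by
    intro h
    apply rep_not_both_zero t2
    refine ⟨h, ?_⟩
    have h' := root2
    rw [h] at h'
    simpa using h'
  -- the first two curve vectors are linearly independent
  have hvind : LinearIndependent ℂ ![phiVec x1 y1, phiVec x2 y2] := by
    rw [LinearIndependent.pair_iff]
    intro s t hst
    have e0 : s * x1^5 + t * x2^5 = 0 := congrFun hst 0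
    have e3 : s * y1^5 + t * y2^5 = 0 := congrFun hst 3
    have hs : s = 0 := by
      by_contra hs
      have h5 : x1^5*y2^5 - y1^5*x2^5 = 0 := by
        have hss : s * (x1^5*y2^5 - y1^5*x2^5) = 0 := by
          linear_combination y2^5 * e0 - x2^5 * e3
        rcases mul_eq_zero.mp hss with h | h
        · exact absurd h hs
        · exact h
      have hu : (y1/x1)^4 - 4*(y1/x1)^2 + 1 = 0 := by
        have hh : (y1/x1)^4 - 4*(y1/x1)^2 + 1 = (x1^4 - 4*x1^2*y1^2 + y1^4)/x1^4 := by
          field_simp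
          ring
        rw [hh, root1, zero_div]
      have hv : (y2/x2)^4 - 4*(y2/x2)^2 + 1 = 0 := by
        have hh : (y2/x2)^4 - 4*(y2/x2)^2 + 1 = (x2^4 - 4*x2^2*y2^2 + y2^4)/x2^4 := by
          field_simp
          ring
        rw [hh, root2, zero_div]
      have huv : (y1/x1)^5 = (y2/x2)^5 := by
        rw [div_pow, div_pow, div_eq_div_iff (pow_ne_zero 5 hx1) (pow_ne_zero 5 hx2)]
        linear_combination -h5
      have hne : (y1/x1) ≠ (y2/x2) := by
        intro h
        rw [div_eq_div_iff hx1 hx2] at h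
        exact c12 (by linear_combination -h)
      have hg : (y1/x1)^4 + (y1/x1)^3*(y2/x2) + (y1/x1)^2*(y2/x2)^2
          + (y1/x1)*(y2/x2)^3 + (y2/x2)^4 = 0 := by
        have hfac : ((y1/x1) - (y2/x2)) * ((y1/x1)^4 + (y1/x1)^3*(y2/x2) + (y1/x1)^2*(y2/x2)^2
            + (y1/x1)*(y2/x2)^3 + (y2/x2)^4) = 0 := by
          linear_combination huv
        rcases mul_eq_zero.mp hfac with h | h
        · exact absurd (sub_eq_zero.mp h) hne
        · exact h
      exact quintic_cert _ _ hu hv hg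
    have ht : t = 0 := by
      rw [hs] at e0
      simp only [zero_mul, zero_add] at e0
      rcases mul_eq_zero.mp e0 with h | h
      · exact h
      · exact absurd (pow_eq_zero_iff (by norm_num)|>.mp h) hx2
    exact ⟨hs, ht⟩
  -- W is the span of the first two curve vectors
  have hsvW : Submodule.span ℂ (Set.range ![phiVec x1 y1, phiVec x2 y2]) = W := by
    apply Submodule.eq_of_le_of_finrank_eq
    · rw [Submodule.span_le]
      rintro v ⟨i, rfl⟩
      fin_cases i
      · exact hv1
      · exact hv2
    · rw [finrank_span_eq_card hvind, hWrank]
      simp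
  -- the explicit line submodule
  have huind : LinearIndependent ℂ ![(![1,0,-1,0] : Fin 4 → ℂ), ![0,1,0,-1]] := by
    rw [LinearIndependent.pair_iff]
    intro s t hst
    have hA : s * 1 + t * 0 = 0 := congrFun hst 0
    have hB : s * 0 + t * 1 = 0 := congrFun hst 1
    constructor
    · linear_combination hA
    · linear_combination hB
  have hvleU : Submodule.span ℂ (Set.range ![phiVec x1 y1, phiVec x2 y2])
      ≤ Submodule.span ℂ (Set.range ![(![1,0,-1,0] : Fin 4 → ℂ), ![0,1,0,-1]]) := by
    rw [Submodule.span_le]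
    rintro v ⟨i, rfl⟩
    fin_cases i
    · show phiVec x1 y1 ∈ Submodule.span ℂ (Set.range ![(![1,0,-1,0] : Fin 4 → ℂ), ![0,1,0,-1]])
      rw [mem_span_range_iff_exists_fun]
      refine ⟨![x1^5, x1^4*y1 - 4*x1^2*y1^3], ?_⟩
      rw [Fin.sum_univ_two]
      funext j
      fin_cases j
      · show x1^5 * 1 + (x1^4*y1 - 4*x1^2*y1^3) * 0 = x1^5
        ring
      · show x1^5 * 0 + (x1^4*y1 - 4*x1^2*y1^3) * 1 = x1^4*y1 - 4*x1^2*y1^3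
        ring
      · show x1^5 * (-1) + (x1^4*y1 - 4*x1^2*y1^3) * 0 = -4*x1^3*y1^2 + x1*y1^4
        linear_combination -x1 * root1
      · show x1^5 * 0 + (x1^4*y1 - 4*x1^2*y1^3) * (-1) = y1^5
        linear_combination -y1 * root1
    · show phiVec x2 y2 ∈ Submodule.span ℂ (Set.range ![(![1,0,-1,0] : Fin 4 → ℂ), ![0,1,0,-1]])
      rw [mem_span_range_iff_exists_fun]
      refine ⟨![x2^5, x2^4*y2 - 4*x2^2*y2^3], ?_⟩
      rw [Fin.sum_univ_two]
      funext j
      fin_cases j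
      · show x2^5 * 1 + (x2^4*y2 - 4*x2^2*y2^3) * 0 = x2^5
        ring
      · show x2^5 * 0 + (x2^4*y2 - 4*x2^2*y2^3) * 1 = x2^4*y2 - 4*x2^2*y2^3
        ring
      · show x2^5 * (-1) + (x2^4*y2 - 4*x2^2*y2^3) * 0 = -4*x2^3*y2^2 + x2*y2^4
        linear_combination -x2 * root2
      · show x2^5 * 0 + (x2^4*y2 - 4*x2^2*y2^3) * (-1) = y2^5
        linear_combination -y2 * root2
  have hUeq : Submodule.span ℂ (Set.range ![phiVec x1 y1, phiVec x2 y2])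
      = Submodule.span ℂ (Set.range ![(![1,0,-1,0] : Fin 4 → ℂ), ![0,1,0,-1]]) := by
    apply Submodule.eq_of_le_of_finrank_eq hvleU
    rw [finrank_span_eq_card hvind, finrank_span_eq_card huind]
  have hWU : W = Submodule.span ℂ (Set.range ![(![1,0,-1,0] : Fin 4 → ℂ), ![0,1,0,-1]]) := by
    rw [← hsvW, hUeq]
  -- conclusion
  rw [hLW]
  ext p
  simp only [Set.mem_setOf_eq, lineL1]
  constructor
  · intro hp
    have hmem : p.rep ∈ W := by
      apply hp
      rw [Projectivization.submodule_eq]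
      exact Submodule.mem_span_singleton_self _
    rw [hWU, mem_span_range_iff_exists_fun] at hmem
    obtain ⟨c, hc⟩ := hmem
    rw [Fin.sum_univ_two] at hc
    have g0 : c 0 * 1 + c 1 * 0 = p.rep 0 := congrFun hc 0
    have g1 : c 0 * 0 + c 1 * 1 = p.rep 1 := congrFun hc 1
    have g2 : c 0 * (-1) + c 1 * 0 = p.rep 2 := congrFun hc 2
    have g3 : c 0 * 0 + c 1 * (-1) = p.rep 3 := congrFun hc 3
    constructor
    · linear_combination -g0 - g2
    · linear_combination -g3 - g1
  · rintro ⟨hA, hB⟩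
    show p.submodule ≤ W
    rw [Projectivization.submodule_eq, Submodule.span_singleton_le_iff_mem, hWU,
      mem_span_range_iff_exists_fun]
    refine ⟨![p.rep 0, p.rep 1], ?_⟩
    rw [Fin.sum_univ_two]
    funext j
    fin_cases j
    · show p.rep 0 * 1 + p.rep 1 * 0 = p.rep 0
      ring
    · show p.rep 0 * 0 + p.rep 1 * 1 = p.rep 1
      ring
    · show p.rep 0 * (-1) + p.rep 1 * 0 = p.rep 2
      linear_combination -hA
    · show p.rep 0 * 0 + p.rep 1 * (-1) = p.rep 3
      linear_combination -hB
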